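/- Fix real L ≠ 0 and positive integers κ and N_1, and let A > 0. Then there exists a positive integer N* (depending only on L, κ, N_1, and A) with the following property: for every sequence (c_m)_{m≥1} with each c_m ∈ {−1, +1} whose partial sums s_n = Σ_{m=1}^n c_m satisfy s_n/(n+κ) ≥ L/3 for all n > N_1 (in the case L > 0), or satisfy s_n/(n+κ) ≤ L/3 for all n > N_1 (in the case L < 0), one has |Σ_{m=1}^{N*} c_m·(1/(m+κ))| > A. -/

import Mathlib

open Filter Topology

lemma abel_identity (c : ℕ → ℝ) (κ : ℕ) (hκ : 0 < κ) (N : ℕ) :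
    ∑ m ∈ Finset.Icc 1 N, c m * (1 / ((m : ℝ) + κ)) =
      (∑ m ∈ Finset.Icc 1 N, c m) / ((N : ℝ) + κ) +
      ∑ n ∈ Finset.Ico 1 N, (∑ m ∈ Finset.Icc 1 n, c m) *
        (1 / (((n : ℝ) + κ) * ((n : ℝ) + 1 + κ))) := by
  induction N with
  | zero => simp
  | succ N ih =>
    rcases Nat.eq_zero_or_pos N with rfl | hN
    · simp [div_eq_mul_inv]
    have h1 : (1:ℕ) ≤ N := hN
    rw [Finset.sum_Icc_succ_top (by omega : 1 ≤ N + 1),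
        Finset.sum_Ico_succ_top h1, ih,
        Finset.sum_Icc_succ_top (by omega : 1 ≤ N + 1)]
    have hκ' : (0:ℝ) < κ := by exact_mod_cast hκ
    have hd1 : ((N:ℝ) + κ) ≠ 0 := by positivity
    have hd2 : ((N:ℝ) + 1 + κ) ≠ 0 := by positivity
    push_cast
    field_simp
    ring

lemma harmonic_shift_tendsto (κ : ℕ) :
    Tendsto (fun N => ∑ n ∈ Finset.range N, 1 / ((n : ℝ) + 1 + κ)) atTop atTop := by
  have hnonneg : ∀ n : ℕ, 0 ≤ 1 / ((n : ℝ) + 1 + κ) := by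
    intro n; positivity
  rw [← not_summable_iff_tendsto_nat_atTop_of_nonneg hnonneg]
  intro hsum
  have : Summable (fun n : ℕ => 1 / ((n : ℝ))) := by
    rw [← summable_nat_add_iff (1 + κ)]
    convert hsum using 2 with n
    rfl
    push_cast
    ring
  exact Real.not_summable_one_div_natCast this

lemma abs_partial_sum_le (c : ℕ → ℝ) (hc : ∀ m, 1 ≤ m → c m = 1 ∨ c m = -1) (n : ℕ) :
    |∑ m ∈ Finset.Icc 1 n, c m| ≤ (n : ℝ) := by
  calc |∑ m ∈ Finset.Icc 1 n, c m| ≤ ∑ m ∈ Finset.Icc 1 n, |c m| :=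
        Finset.abs_sum_le_sum_abs _ _
    _ = ∑ m ∈ Finset.Icc 1 n, (1:ℝ) := by
        apply Finset.sum_congr rfl
        intro m hm
        rcases hc m (Finset.mem_Icc.mp hm).1 with h | h <;> simp [h]
    _ = (n : ℝ) := by simp

lemma key (L : ℝ) (hL : 0 < L) (κ N₁ : ℕ) (hκ : 0 < κ) (A : ℝ) (hA : 0 < A) :
    ∃ Nstar : ℕ, 0 < Nstar ∧
      ∀ c : ℕ → ℝ, (∀ m, 1 ≤ m → c m = 1 ∨ c m = -1) →
        (∀ n, N₁ < n → L / 3 ≤ (∑ m ∈ Finset.Icc 1 n, c m) / ((n : ℝ) + κ)) →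
        A < ∑ m ∈ Finset.Icc 1 Nstar, c m * (1 / ((m : ℝ) + κ)) := by
  have hκ' : (0:ℝ) < κ := by exact_mod_cast hκ
  set C : ℝ := 3 * (A + 1 + N₁) / L + 1 with hC
  obtain ⟨Nstar, hbig, hge⟩ :=
    ((tendsto_atTop.mp (harmonic_shift_tendsto κ)
      (C + ∑ n ∈ Finset.range (N₁ + 1), 1 / ((n : ℝ) + 1 + κ))).and
      (eventually_ge_atTop (N₁ + 1))).exists
  refine ⟨Nstar, by omega, ?_⟩
  intro c hc hs
  rw [abel_identity c κ hκ Nstar]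
  have hsplit : ∑ n ∈ Finset.Ico 1 Nstar, (∑ m ∈ Finset.Icc 1 n, c m) *
        (1 / (((n : ℝ) + κ) * ((n : ℝ) + 1 + κ)))
      = (∑ n ∈ Finset.Ico 1 (N₁ + 1), (∑ m ∈ Finset.Icc 1 n, c m) *
          (1 / (((n : ℝ) + κ) * ((n : ℝ) + 1 + κ)))) +
        ∑ n ∈ Finset.Ico (N₁ + 1) Nstar, (∑ m ∈ Finset.Icc 1 n, c m) *
          (1 / (((n : ℝ) + κ) * ((n : ℝ) + 1 + κ))) :=
    (Finset.sum_Ico_consecutive _ (by omega) hge).symm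
  rw [hsplit]
  -- term 1 bound
  have h1 : (-1 : ℝ) ≤ (∑ m ∈ Finset.Icc 1 Nstar, c m) / ((Nstar : ℝ) + κ) := by
    rw [le_div_iff₀ (by positivity)]
    have := (abs_le.mp (abs_partial_sum_le c hc Nstar)).1
    nlinarith
  -- term 2 bound
  have h2 : -(N₁ : ℝ) ≤ ∑ n ∈ Finset.Ico 1 (N₁ + 1), (∑ m ∈ Finset.Icc 1 n, c m) *
      (1 / (((n : ℝ) + κ) * ((n : ℝ) + 1 + κ))) := by
    have hcard : (Finset.Ico 1 (N₁ + 1)).card = N₁ := by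
      rw [Nat.card_Ico]; omega
    calc -(N₁ : ℝ) = (Finset.Ico 1 (N₁ + 1)).card • (-1 : ℝ) := by
          rw [hcard]; simp
      _ ≤ _ := by
          apply Finset.card_nsmul_le_sum
          intro n hn
          have hD : (0:ℝ) < ((n : ℝ) + κ) * ((n : ℝ) + 1 + κ) := by positivity
          have hsn := (abs_le.mp (abs_partial_sum_le c hc n)).1
          have hnD : (n : ℝ) ≤ ((n : ℝ) + κ) * ((n : ℝ) + 1 + κ) := by nlinarith
          rw [mul_one_div, le_div_iff₀ hD]
          linarith
  -- term 3 bound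
  have h3 : L / 3 * (∑ n ∈ Finset.Ico (N₁ + 1) Nstar, 1 / ((n : ℝ) + 1 + κ))
      ≤ ∑ n ∈ Finset.Ico (N₁ + 1) Nstar, (∑ m ∈ Finset.Icc 1 n, c m) *
        (1 / (((n : ℝ) + κ) * ((n : ℝ) + 1 + κ))) := by
    rw [Finset.mul_sum]
    apply Finset.sum_le_sum
    intro n hn
    obtain ⟨hn1, _⟩ := Finset.mem_Ico.mp hn
    have hd1 : (0:ℝ) < (n : ℝ) + κ := by positivity
    have hd2 : (0:ℝ) < (n : ℝ) + 1 + κ := by positivity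
    have hsL : L / 3 * ((n : ℝ) + κ) ≤ ∑ m ∈ Finset.Icc 1 n, c m := by
      have := hs n (by omega)
      rwa [le_div_iff₀ hd1] at this
    rw [mul_one_div, mul_one_div, div_le_div_iff₀ hd2 (by positivity)]
    nlinarith [mul_le_mul_of_nonneg_right hsL hd2.le]
  -- the tail harmonic sum is at least C
  have hS : C ≤ ∑ n ∈ Finset.Ico (N₁ + 1) Nstar, 1 / ((n : ℝ) + 1 + κ) := by
    rw [Finset.sum_Ico_eq_sub _ hge]
    linarith
  have hmul : L / 3 * C ≤ L / 3 * (∑ n ∈ Finset.Ico (N₁ + 1) Nstar, 1 / ((n : ℝ) + 1 + κ)) :=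
    mul_le_mul_of_nonneg_left hS (by linarith)
  have hCval : L / 3 * C = A + 1 + (N₁ : ℝ) + L / 3 := by
    rw [hC]; field_simp
  linarith


/-- **Corollary 3.4.** Given `L ≠ 0`, positive integers `κ, N₁` and `A > 0`, there is
`N*` (depending only on `L, κ, N₁, A`) such that every `±1`-sequence whose partial sums
satisfy `s_n/(n+κ) ≥ L/3` (if `L > 0`), resp. `≤ L/3` (if `L < 0`), for all `n > N₁`
has `|Σ_{m=1}^{N*} c_m/(m+κ)| > A`. -/
theorem exists_Nstar_uniform (L : ℝ) (hL : L ≠ 0) (κ N₁ : ℕ) (hκ : 0 < κ)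
    (hN₁ : 0 < N₁) (A : ℝ) (hA : 0 < A) :
    ∃ Nstar : ℕ, 0 < Nstar ∧
      ∀ c : ℕ → ℝ, (∀ m, 1 ≤ m → c m = 1 ∨ c m = -1) →
        ((0 < L → ∀ n, N₁ < n →
            L / 3 ≤ (∑ m ∈ Finset.Icc 1 n, c m) / ((n : ℝ) + (κ : ℝ))) ∧
         (L < 0 → ∀ n, N₁ < n →
            (∑ m ∈ Finset.Icc 1 n, c m) / ((n : ℝ) + (κ : ℝ)) ≤ L / 3)) →
        A < |∑ m ∈ Finset.Icc 1 Nstar, c m * (1 / ((m : ℝ) + (κ : ℝ)))| := by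
  rcases hL.lt_or_gt with hneg | hpos
  · obtain ⟨Nstar, hNs, H⟩ := key (-L) (by linarith) κ N₁ hκ A hA
    refine ⟨Nstar, hNs, ?_⟩
    intro c hc hcond
    have hc' : ∀ m, 1 ≤ m → (fun m => -(c m)) m = 1 ∨ (fun m => -(c m)) m = -1 := by
      intro m hm
      rcases hc m hm with h | h <;> simp [h]
    have hcond' : ∀ n, N₁ < n →
        (-L) / 3 ≤ (∑ m ∈ Finset.Icc 1 n, (fun m => -(c m)) m) / ((n : ℝ) + κ) := by
      intro n hn
      have := hcond.2 hneg n hn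
      simp only [Finset.sum_neg_distrib, neg_div]
      linarith
    have := H (fun m => -(c m)) hc' hcond'
    simp only [neg_mul, Finset.sum_neg_distrib] at this
    calc A < -(∑ m ∈ Finset.Icc 1 Nstar, c m * (1 / ((m : ℝ) + κ))) := this
      _ ≤ |∑ m ∈ Finset.Icc 1 Nstar, c m * (1 / ((m : ℝ) + κ))| := neg_le_abs _
  · obtain ⟨Nstar, hNs, H⟩ := key L hpos κ N₁ hκ A hA
    refine ⟨Nstar, hNs, ?_⟩
    intro c hc hcond
    exact lt_of_lt_of_le (H c hc (hcond.1 hpos)) (le_abs_self _)
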